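/- Let N ≥ 1, q ∈ ℂ∖{0} and Λ_1,…,Λ_N ∈ ℂ∖{0}. For every subset I ⊆ {1,…,N}, as the real parameter t → +∞ the product ∏ over pairs (i,j) with i ∈ I, j ∉ I and j < i of [ (t^{i−j−1} Λ_j − Λ_i)/(t^{i−j} Λ_j − Λ_i) ] · [ (t^{i−j+1} Λ_j − q Λ_i)/(t^{i−j} Λ_j − q Λ_i) ] tends to ∏_{i ∈ I, i ≥ 2, i−1 ∉ I} (1 − Λ_i/Λ_{i−1}). Consequently the type-A Pieri operators 𝓗_a(Λ; q, t) = Σ_{I ⊆ {1,…,N}, |I| = a} ( ∏_{i∈I, j∉I, j<i} [(t^{i−j−1}Λ_j − Λ_i)/(t^{i−j}Λ_j − Λ_i)]·[(t^{i−j+1}Λ_j − qΛ_i)/(t^{i−j}Λ_j − qΛ_i)] ) ∏_{i∈I} T_i converge coefficientwise as t → ∞ to the relativistic q-difference Toda Hamiltonians H_a(Λ; q) = Σ_{|I| = a} ∏_{i∈I, i−1∉I} (1 − Λ_i/Λ_{i−1}) ∏_{i∈I} T_i of type A_{N−1}^{(1)}, with the convention Λ_0 = ∞ (i.e. the factor corresponding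 to i = 1 equals 1). -/

import Mathlib

open scoped BigOperators Topology
open Filter

noncomputable section

lemma inv_pow_tendsto (m : ℕ) :
    Tendsto (fun t : ℝ => ((t:ℂ) ^ m)⁻¹) atTop (𝓝 (if m = 0 then 1 else 0)) := by
  rcases Nat.eq_zero_or_pos m with h | h
  · simp [h]
  · simp only [if_neg h.ne']
    have h1 : Tendsto (fun t : ℝ => (t ^ m)⁻¹) atTop (𝓝 0) :=
      (tendsto_pow_atTop h.ne').inv_tendsto_atTop
    have h2 := (Complex.continuous_ofReal.tendsto 0).comp h1
    simpa [Function.comp_def, Complex.ofReal_inv, Complex.ofReal_pow] using h2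

lemma factor_tendsto (q a b : ℂ) (hb : b ≠ 0) (k : ℕ) (hk : 1 ≤ k) :
    Tendsto (fun t : ℝ =>
        (((t:ℂ) ^ ((k:ℤ) - 1) * b - a) / ((t:ℂ) ^ (k:ℤ) * b - a)) *
          (((t:ℂ) ^ ((k:ℤ) + 1) * b - q * a) / ((t:ℂ) ^ (k:ℤ) * b - q * a)))
      atTop (𝓝 (1 - (if k = 1 then a / b else 0))) := by
  obtain ⟨m, rfl⟩ := Nat.exists_eq_add_of_le hk
  have he1 : ((1 + m : ℕ) : ℤ) - 1 = (m : ℤ) := by push_cast; ring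
  have he2 : ((1 + m : ℕ) : ℤ) = ((m + 1 : ℕ) : ℤ) := by push_cast; ring
  have he3 : ((1 + m : ℕ) : ℤ) + 1 = ((m + 2 : ℕ) : ℤ) := by push_cast; ring
  have he1' : ((m + 1 : ℕ) : ℤ) - 1 = (m : ℤ) := by push_cast; ring
  have he3' : ((m + 1 : ℕ) : ℤ) + 1 = ((m + 2 : ℕ) : ℤ) := by push_cast; ring
  set g : ℝ → ℂ := fun t =>
    ((b - ((t:ℂ) ^ m)⁻¹ * a) * (b - ((t:ℂ) ^ (m + 2))⁻¹ * (q * a))) /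
      ((b - ((t:ℂ) ^ (m + 1))⁻¹ * a) * (b - ((t:ℂ) ^ (m + 1))⁻¹ * (q * a))) with hg
  have hglim : Tendsto g atTop
      (𝓝 (((b - (if m = 0 then 1 else 0) * a) * (b - 0 * (q * a))) / ((b - 0 * a) * (b - 0 * (q * a))))) := by
    apply Tendsto.div
    · exact ((tendsto_const_nhds.sub ((inv_pow_tendsto m).mul tendsto_const_nhds)).mul
        (tendsto_const_nhds.sub (by simpa using ((inv_pow_tendsto (m+2)).mul tendsto_const_nhds))))
    · exact ((tendsto_const_nhds.sub (by simpa using ((inv_pow_tendsto (m+1)).mul tendsto_const_nhds))).mul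
        (tendsto_const_nhds.sub (by simpa using ((inv_pow_tendsto (m+1)).mul tendsto_const_nhds))))
    · simp [hb]
  have hval : ((b - (if m = 0 then 1 else 0) * a) * (b - 0 * (q * a))) / ((b - 0 * a) * (b - 0 * (q * a)))
      = 1 - (if 1 + m = 1 then a / b else 0) := by
    rcases Nat.eq_zero_or_pos m with h | h
    · subst h; simp only [↓reduceIte, Nat.add_zero, zero_mul, mul_zero, sub_zero]; field_simp
    · have : 1 + m ≠ 1 := by omega
      simp [h.ne', this, hb]
  rw [← hval]
  apply hglim.congr'
  filter_upwards [eventually_ge_atTop (1 : ℝ)] with t ht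
  have hc : (t : ℂ) ≠ 0 := by
    simp only [ne_eq, Complex.ofReal_eq_zero]
    linarith
  set c : ℂ := (t : ℂ)
  rw [hg]
  simp only [he1, he2, he3, he1', he3', zpow_natCast]
  rw [eq_comm, div_mul_div_comm]
  have hpne : (c ^ (2 * m + 2))⁻¹ ≠ 0 := inv_ne_zero (pow_ne_zero _ hc)
  rw [← mul_div_mul_left _ _ hpne]
  congr 1
  · simp only [show (t : ℂ) = c from rfl]
    field_simp
    ring
  · simp only [show (t : ℂ) = c from rfl]
    field_simp
    ring

/-- The q-Whittaker limit of the type-A Pieri operators: for every subset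
`I ⊆ {1,…,N}`, the coefficient of `∏_{i∈I} T_i` in the Pieri operator `𝓗_a(Λ; q, t)`,
namely
`∏_{i∈I, j∉I, j<i} [(t^{i-j-1} Λ_j - Λ_i)/(t^{i-j} Λ_j - Λ_i)] ·
  [(t^{i-j+1} Λ_j - q Λ_i)/(t^{i-j} Λ_j - q Λ_i)]`,
tends as `t → +∞` to `∏_{i∈I, 2≤i, i-1∉I} (1 - Λ_i/Λ_{i-1})` (the convention `Λ_0 = ∞`
making the factor for `i = 1` equal to `1`).  Consequently the Pieri operators
`𝓗_a(Λ; q, t)` converge coefficientwise to the relativistic q-difference Toda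
Hamiltonians `H_a(Λ; q) = ∑_{|I|=a} ∏_{i∈I, i-1∉I} (1 - Λ_i/Λ_{i-1}) ∏_{i∈I} T_i`
of type `A_{N-1}^{(1)}`. -/
theorem pieri_whittaker_limit_A (N : ℕ) (hN : 1 ≤ N) (q : ℂ) (hq : q ≠ 0)
    (Λ : ℕ → ℂ) (hΛ : ∀ i ∈ Finset.Icc 1 N, Λ i ≠ 0)
    (I : Finset ℕ) (hI : I ⊆ Finset.Icc 1 N) :
    Tendsto (fun t : ℝ =>
        ∏ i ∈ I, ∏ j ∈ (Finset.Ico 1 i).filter (fun j => j ∉ I),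
          (((t : ℂ) ^ ((i : ℤ) - (j : ℤ) - 1) * Λ j - Λ i) /
              ((t : ℂ) ^ ((i : ℤ) - (j : ℤ)) * Λ j - Λ i)) *
            (((t : ℂ) ^ ((i : ℤ) - (j : ℤ) + 1) * Λ j - q * Λ i) /
              ((t : ℂ) ^ ((i : ℤ) - (j : ℤ)) * Λ j - q * Λ i)))
      atTop
      (𝓝 (∏ i ∈ I.filter (fun i => 2 ≤ i ∧ i - 1 ∉ I), (1 - Λ i / Λ (i - 1)))) := by
  classical
  have hL : ∀ i ∈ I, ∀ j ∈ (Finset.Ico 1 i).filter (fun j => j ∉ I),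
      Tendsto (fun t : ℝ =>
        (((t : ℂ) ^ ((i : ℤ) - (j : ℤ) - 1) * Λ j - Λ i) /
            ((t : ℂ) ^ ((i : ℤ) - (j : ℤ)) * Λ j - Λ i)) *
          (((t : ℂ) ^ ((i : ℤ) - (j : ℤ) + 1) * Λ j - q * Λ i) /
            ((t : ℂ) ^ ((i : ℤ) - (j : ℤ)) * Λ j - q * Λ i))) atTop
        (𝓝 (1 - (if i - j = 1 then Λ i / Λ j else 0))) := by
    intro i hi j hj
    simp only [Finset.mem_filter, Finset.mem_Ico] at hj
    obtain ⟨⟨hj1, hji⟩, hjI⟩ := hj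
    have hiN := Finset.mem_Icc.1 (hI hi)
    have hbj : Λ j ≠ 0 := hΛ j (Finset.mem_Icc.2 ⟨hj1, le_trans hji.le hiN.2⟩)
    have hk : 1 ≤ i - j := by omega
    have hcast : (i : ℤ) - (j : ℤ) = ((i - j : ℕ) : ℤ) := by
      rw [Nat.cast_sub hji.le]
    rw [hcast]
    exact factor_tendsto q (Λ i) (Λ j) hbj (i - j) hk
  have main := tendsto_finset_prod I (fun i hi =>
    tendsto_finset_prod ((Finset.Ico 1 i).filter (fun j => j ∉ I)) (fun j hj => hL i hi j hj))
  have hprod : (∏ i ∈ I, ∏ j ∈ (Finset.Ico 1 i).filter (fun j => j ∉ I),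
      (1 - (if i - j = 1 then Λ i / Λ j else 0)))
      = ∏ i ∈ I.filter (fun i => 2 ≤ i ∧ i - 1 ∉ I), (1 - Λ i / Λ (i - 1)) := by
    rw [Finset.prod_filter]
    refine Finset.prod_congr rfl (fun i hi => ?_)
    have hi1 : 1 ≤ i := (Finset.mem_Icc.1 (hI hi)).1
    have hinner : (∏ j ∈ (Finset.Ico 1 i).filter (fun j => j ∉ I),
        (1 - (if i - j = 1 then Λ i / Λ j else 0)))
        = ∏ j ∈ (Finset.Ico 1 i).filter (fun j => j ∉ I),
          (if j = i - 1 then 1 - Λ i / Λ (i - 1) else 1) := by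
      refine Finset.prod_congr rfl (fun j hj => ?_)
      simp only [Finset.mem_filter, Finset.mem_Ico] at hj
      by_cases h : j = i - 1
      · subst h
        have : i - (i - 1) = 1 := by omega
        simp [this]
      · have : i - j ≠ 1 := by omega
        simp [h, this]
    rw [hinner, Finset.prod_ite_eq']
    simp only [Finset.mem_filter, Finset.mem_Ico]
    have hiff : ((1 ≤ i - 1 ∧ i - 1 < i) ∧ i - 1 ∉ I) ↔ (2 ≤ i ∧ i - 1 ∉ I) :=
      ⟨fun ⟨⟨h1, _⟩, h2⟩ => ⟨by omega, h2⟩, fun ⟨h1, h2⟩ => ⟨⟨by omega, by omega⟩, h2⟩⟩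
    simp only [hiff]
  rw [← hprod]
  exact main
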